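/- Let n ≥ 6, let V = {0,1,…,n−1} with the natural order, and let Q be a partial quasi-pairing of V such that X := ∪Q is a transversal of mc(underline(n)) and Q is an irreducible quasi-pairing of X. Let M be a nontrivial module of T := Inv(underline(n), Q), and write m^- := min(M), m^+ := max(M). Then at most 2 elements of V ∖ M lie in the closed interval [m^-, m^+]. -/

import Mathlib

open Set

/-- The arc relation of the tournament `Inv(underline(V), P)` obtained from the
transitive tournament on a linearly ordered type by reversing the arcs `(x,y)`
with `{x,y} ∈ P`. -/
def InvArc {α : Type*} [LinearOrder α] (P : Set (Set α)) (x y : α) : Prop :=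
  (x < y ∧ ({x, y} : Set α) ∉ P) ∨ (y < x ∧ ({x, y} : Set α) ∈ P)

/-- `M` is a module of the subtournament of `Inv(·, P)` induced on the vertex set `W`. -/
def IsModuleOn {α : Type*} [LinearOrder α] (P : Set (Set α)) (W M : Set α) : Prop :=
  M ⊆ W ∧ ∀ v ∈ W, v ∉ M →
    (∀ x ∈ M, InvArc P v x) ∨ (∀ x ∈ M, InvArc P x v)

/-- A subset of the vertex set `W` is trivial if it is empty, a singleton, or all of `W`. -/
def IsTrivialSubset {α : Type*} (W M : Set α) : Prop :=
  M = ∅ ∨ (∃ a, M = {a}) ∨ M = W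

/-- A nontrivial module of the tournament `Inv(·, P)` induced on `W`. -/
def IsNontrivialModuleOn {α : Type*} [LinearOrder α] (P : Set (Set α)) (W M : Set α) : Prop :=
  IsModuleOn P W M ∧ ¬ IsTrivialSubset W M

/-- The tournament `Inv(·, P)` induced on `W` is indecomposable: all its modules are trivial. -/
def IndecomposableOn {α : Type*} [LinearOrder α] (P : Set (Set α)) (W : Set α) : Prop :=
  ∀ M : Set α, IsModuleOn P W M → IsTrivialSubset W M

/-- The tournament `Inv(·, P)` induced on `W` is decomposable: it has a nontrivial module. -/
def DecomposableOn {α : Type*} [LinearOrder α] (P : Set (Set α)) (W : Set α) : Prop :=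
  ∃ M : Set α, IsNontrivialModuleOn P W M

/-- A co-module of the tournament `Inv(·, P)` on `W`: a subset `M` of `W` such that
`M` or `W ∖ M` is a nontrivial module. -/
def IsCoModuleOn {α : Type*} [LinearOrder α] (P : Set (Set α)) (W M : Set α) : Prop :=
  M ⊆ W ∧ (IsNontrivialModuleOn P W M ∨ IsNontrivialModuleOn P W (W \ M))

/-- `mc(underline(W))`: the family of minimal co-modules of the transitive tournament on `W`
(a minimal co-module contains no other co-module). -/
def mcOn {α : Type*} [LinearOrder α] (W : Set α) : Set (Set α) :=
  {M | IsCoModuleOn (∅ : Set (Set α)) W M ∧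
    ∀ C : Set α, IsCoModuleOn (∅ : Set (Set α)) W C → C ⊆ M → C = M}

/-- `S` is a transversal of the family `F`: it meets every member of `F`. -/
def TransversalOf {α : Type*} (S : Set α) (F : Set (Set α)) : Prop :=
  ∀ C ∈ F, (S ∩ C).Nonempty

/-- A partial pairing of `V`: a set of pairwise disjoint 2-element subsets of `V`. -/
def IsPartialPairingOn {α : Type*} (V : Set α) (P : Set (Set α)) : Prop :=
  (∀ B ∈ P, B ⊆ V ∧ B.ncard = 2) ∧
  ∀ B ∈ P, ∀ C ∈ P, B ≠ C → Disjoint B C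

/-- `I` is an interval of the totally ordered set `X`: every element of `X ∖ I` is greater
than all elements of `I` or smaller than all of them. -/
def IsIntervalOf {α : Type*} [LinearOrder α] (X I : Set α) : Prop :=
  I ⊆ X ∧ ∀ v ∈ X \ I, (∀ i ∈ I, v < i) ∨ (∀ i ∈ I, i < v)

/-- A nontrivial interval of `X`. -/
def IsNontrivialIntervalOf {α : Type*} [LinearOrder α] (X I : Set α) : Prop :=
  IsIntervalOf X I ∧ ¬ IsTrivialSubset X I

/-- A family of blocks `P` on the totally ordered set `X` is irreducible if no nontrivial
interval of `X` is a union of blocks of `P`. -/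
def IrreducibleOn {α : Type*} [LinearOrder α] (X : Set α) (P : Set (Set α)) : Prop :=
  ∀ R ⊆ P, ¬ IsNontrivialIntervalOf X (⋃₀ R)

/-- A partial quasi-pairing of `V`: a set `Q` of `m+1` two-element subsets of `V` (`m ≥ 1`)
whose union has size `2m+1`. -/
def IsPartialQuasiPairingOn {α : Type*} (V : Set α) (Q : Set (Set α)) : Prop :=
  (∀ B ∈ Q, B ⊆ V ∧ B.ncard = 2) ∧
  ∃ m : ℕ, 1 ≤ m ∧ (⋃₀ Q).ncard = 2 * m + 1 ∧ Q.ncard = m + 1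

/-- The distinguished data of a quasi-pairing `Q`: `vh = v̂_Q` is the element lying in the two
blocks `{vh, vm}` and `{vh, vp}` of `Q`, with `vm = v_Q^- < v_Q^+ = vp`. -/
def QPData {α : Type*} [LinearOrder α] (Q : Set (Set α)) (vh vm vp : α) : Prop :=
  ({vh, vm} : Set α) ∈ Q ∧ ({vh, vp} : Set α) ∈ Q ∧ vm < vp

/-- `Q_part`: the partition of `⋃₀ Q` obtained from `Q` by merging its two intersecting
blocks into `B_Q = {v̂_Q, v_Q^-, v_Q^+}`. -/
def QPart {α : Type*} [LinearOrder α] (Q : Set (Set α)) (vh vm vp : α) : Set (Set α) :=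
  (Q \ {({vh, vm} : Set α), ({vh, vp} : Set α)}) ∪ {({vh, vm, vp} : Set α)}


lemma sUnion_ncard_le_two_mul : ∀ (F : Set (Set ℕ)), F.Finite →
    (∀ B ∈ F, B.Finite ∧ B.ncard ≤ 2) → (⋃₀ F).ncard ≤ 2 * F.ncard := by
  intro F hF
  induction F, hF using Set.Finite.induction_on with
  | empty => intro _; simp
  | @insert B F hBF hFfin ih =>
    intro hb
    rw [Set.sUnion_insert]
    have h1 : (B ∪ ⋃₀ F).ncard ≤ B.ncard + (⋃₀ F).ncard := Set.ncard_union_le _ _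
    have h2 := ih (fun C hC => hb C (Or.inr hC))
    have h3 : B.ncard ≤ 2 := (hb B (Or.inl rfl)).2
    have h4 : (insert B F).ncard = F.ncard + 1 := Set.ncard_insert_of_notMem hBF hFfin
    omega

lemma pairwise_of_ncard (F : Set (Set ℕ)) (hF : F.Finite)
    (hb : ∀ B ∈ F, B.Finite ∧ B.ncard ≤ 2)
    (hc : 2 * F.ncard ≤ (⋃₀ F).ncard) :
    ∀ B ∈ F, ∀ C ∈ F, B ≠ C → ∀ x, x ∈ B → x ∈ C → False := by
  intro B hB C hC hne x hxB hxC
  have hsub : ⋃₀ F ⊆ ⋃₀ (F \ {B}) ∪ (B \ {x}) := by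
    intro y hy
    obtain ⟨D, hD, hyD⟩ := hy
    by_cases hDB : D = B
    · subst hDB
      by_cases hyx : y = x
      · refine Or.inl ⟨C, ⟨hC, ?_⟩, by subst hyx; exact hxC⟩
        simp only [Set.mem_singleton_iff]
        exact fun h => hne h.symm
      · exact Or.inr ⟨hyD, hyx⟩
    · exact Or.inl ⟨D, ⟨hD, hDB⟩, hyD⟩
  have hfinU : (⋃₀ (F \ {B})).Finite :=
    Set.Finite.sUnion hF.diff (fun C hC => (hb C (Set.diff_subset hC)).1)
  have hfinB : (B \ {x}).Finite := ((hb B hB).1).diff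
  have h1 : (⋃₀ F).ncard ≤ (⋃₀ (F \ {B})).ncard + (B \ {x}).ncard :=
    le_trans (Set.ncard_le_ncard hsub (hfinU.union hfinB)) (Set.ncard_union_le _ _)
  have h2 : (⋃₀ (F \ {B})).ncard ≤ 2 * (F \ {B}).ncard :=
    sUnion_ncard_le_two_mul _ hF.diff (fun C hC => hb C (Set.diff_subset hC))
  have h3 : (F \ {B}).ncard = F.ncard - 1 := Set.ncard_diff_singleton_of_mem hB
  have h4 : (B \ {x}).ncard = B.ncard - 1 := Set.ncard_diff_singleton_of_mem hxB
  have h5 : B.ncard ≤ 2 := (hb B hB).2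
  have h6 : 1 ≤ F.ncard := (Set.ncard_pos hF).mpr ⟨B, hB⟩
  omega

lemma zero_mem_mcOn (n : ℕ) (hn : 6 ≤ n) : ({0} : Set ℕ) ∈ mcOn (Set.Iio n) := by
  constructor
  · refine ⟨by simp [Set.singleton_subset_iff]; omega, Or.inr ⟨⟨Set.diff_subset, ?_⟩, ?_⟩⟩
    · intro v hv hv'
      have hv0 : v = 0 := by
        by_contra h
        exact hv' ⟨hv, by simpa using h⟩
      subst hv0
      left
      intro x hx
      exact Or.inl ⟨Nat.pos_of_ne_zero (by simpa using hx.2), by simp⟩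
    · rintro (h | ⟨a, ha⟩ | h)
      · have : (1 : ℕ) ∈ Set.Iio n \ {0} := ⟨by simp; omega, by simp⟩
        rw [h] at this; exact this
      · have h1 : (1 : ℕ) ∈ Set.Iio n \ {0} := ⟨by simp; omega, by simp⟩
        have h2 : (2 : ℕ) ∈ Set.Iio n \ {0} := ⟨by simp; omega, by simp⟩
        rw [ha] at h1 h2
        simp at h1 h2; omega
      · have : (0 : ℕ) ∈ Set.Iio n := by simp; omega
        rw [← h] at this
        exact this.2 rfl
  · intro C hC hsub
    rcases Set.subset_singleton_iff_eq.mp hsub with h | h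
    · exfalso
      subst h
      rcases hC.2 with h' | h'
      · exact h'.2 (Or.inl rfl)
      · rw [Set.diff_empty] at h'
        exact h'.2 (Or.inr (Or.inr rfl))
    · exact h

lemma last_mem_mcOn (n : ℕ) (hn : 6 ≤ n) : ({n - 1} : Set ℕ) ∈ mcOn (Set.Iio n) := by
  constructor
  · refine ⟨by simp [Set.singleton_subset_iff]; omega, Or.inr ⟨⟨Set.diff_subset, ?_⟩, ?_⟩⟩
    · intro v hv hv'
      have hv0 : v = n - 1 := by
        by_contra h
        exact hv' ⟨hv, by simpa using h⟩
      subst hv0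
      right
      intro x hx
      have hx1 : x < n := hx.1
      have hx2 : x ≠ n - 1 := by simpa using hx.2
      exact Or.inl ⟨by omega, by simp⟩
    · rintro (h | ⟨a, ha⟩ | h)
      · have : (1 : ℕ) ∈ Set.Iio n \ {n - 1} := ⟨by simp; omega, by simp; omega⟩
        rw [h] at this; exact this
      · have h1 : (1 : ℕ) ∈ Set.Iio n \ {n - 1} := ⟨by simp; omega, by simp; omega⟩
        have h2 : (2 : ℕ) ∈ Set.Iio n \ {n - 1} := ⟨by simp; omega, by simp; omega⟩
        rw [ha] at h1 h2
        simp at h1 h2; omega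
      · have : (n - 1 : ℕ) ∈ Set.Iio n := by simp; omega
        rw [← h] at this
        exact this.2 rfl
  · intro C hC hsub
    rcases Set.subset_singleton_iff_eq.mp hsub with h | h
    · exfalso
      subst h
      rcases hC.2 with h' | h'
      · exact h'.2 (Or.inl rfl)
      · rw [Set.diff_empty] at h'
        exact h'.2 (Or.inr (Or.inr rfl))
    · exact h

lemma scenario1 (n : ℕ) (hn : 6 ≤ n) (Q : Set (Set ℕ))
    (hQb : ∀ B ∈ Q, B ⊆ Set.Iio n ∧ B.ncard = 2)
    (vh vm vp : ℕ) (hA1 : ({vh, vm} : Set ℕ) ∈ Q) (hA2 : ({vh, vp} : Set ℕ) ∈ Q)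
    (hmp : vm < vp)
    (hkey : ∀ B ∈ Q, ∀ x ∈ B, x ≠ vh → ∀ C ∈ Q, x ∈ C → C = B)
    (hkey2 : ∀ B ∈ Q, vh ∈ B → B = ({vh, vm} : Set ℕ) ∨ B = ({vh, vp} : Set ℕ))
    (h0X : 0 ∈ ⋃₀ Q) (hNX : n - 1 ∈ ⋃₀ Q)
    (hirr : IrreducibleOn (⋃₀ Q) (QPart Q vh vm vp))
    (M : Set ℕ) (hMsub : M ⊆ Set.Iio n)
    (hMod : ∀ v ∈ Set.Iio n, v ∉ M →
      (∀ x ∈ M, InvArc Q v x) ∨ (∀ x ∈ M, InvArc Q x v))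
    (mlo mhi : ℕ) (hlo : IsLeast M mlo) (hhi : IsGreatest M mhi) (hlohi : mlo < mhi)
    (hGchar0 : ∀ g, g < n → g ∉ M → mlo < g → g < mhi →
      (({mlo, g} : Set ℕ) ∈ Q ∨ ({g, mhi} : Set ℕ) ∈ Q))
    (u : ℕ) (hu : u < n ∧ u ∉ M ∧ mlo < u ∧ u < mhi) (huQ : ({u, mhi} : Set ℕ) ∈ Q)
    (hvh : vh = mlo)
    (hvmG : vm < n ∧ vm ∉ M ∧ mlo < vm ∧ vm < mhi)
    (hvpG : vp < n ∧ vp ∉ M ∧ mlo < vp ∧ vp < mhi)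
    (hune : u ≠ vm ∧ u ≠ vp) : False := by
  have hXsubV : ⋃₀ Q ⊆ Set.Iio n := by
    intro x hx; obtain ⟨B, hB, hxB⟩ := hx; exact (hQb B hB).1 hxB
  have hvhX : vh ∈ ⋃₀ Q := ⟨_, hA1, by simp⟩
  have hvmX : vm ∈ ⋃₀ Q := ⟨_, hA1, by simp⟩
  have hvpX : vp ∈ ⋃₀ Q := ⟨_, hA2, by simp⟩
  have huX : u ∈ ⋃₀ Q := ⟨_, huQ, by simp⟩
  have hmhiX : mhi ∈ ⋃₀ Q := ⟨_, huQ, by simp⟩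
  have hmloM : mlo ∈ M := hlo.1
  have hmhiM : mhi ∈ M := hhi.1
  have hmhi_ne_vh : mhi ≠ vh := by omega
  -- the block of mhi is unique
  have hmhi_block : ∀ C ∈ Q, mhi ∈ C → C = ({u, mhi} : Set ℕ) :=
    hkey ({u, mhi} : Set ℕ) huQ mhi (by simp) hmhi_ne_vh
  -- G is exactly {vm, vp, u}
  have hGchar : ∀ g, g < n → g ∉ M → mlo < g → g < mhi → (g = vm ∨ g = vp ∨ g = u) := by
    intro g hg1 hg2 hg3 hg4
    rcases hGchar0 g hg1 hg2 (by omega) (by omega) with h | h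
    · have hvhmem : vh ∈ ({mlo, g} : Set ℕ) := by rw [hvh]; simp
      rcases hkey2 _ h hvhmem with he | he
      · have : g ∈ ({vh, vm} : Set ℕ) := he ▸ (by simp)
        simp at this
        rcases this with h' | h'
        · omega
        · exact Or.inl h'
      · have : g ∈ ({vh, vp} : Set ℕ) := he ▸ (by simp)
        simp at this
        rcases this with h' | h'
        · omega
        · exact Or.inr (Or.inl h')
    · have := hmhi_block _ h (by simp)
      have hg : g ∈ ({u, mhi} : Set ℕ) := this ▸ (by simp)
      simp at hg
      rcases hg with h' | h'
      · exact Or.inr (Or.inr h')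
      · omega
  -- branch on whether X is inside [mlo, mhi]
  by_cases hXI : ⋃₀ Q ⊆ Set.Icc mlo mhi
  · -- Branch 2 : mlo = 0, mhi = n - 1
    have hmlo0 : mlo = 0 := by
      have := (hXI h0X).1; omega
    have hmhiN : mhi = n - 1 := by
      have h1 := (hXI hNX).2
      have h2 : mhi < n := hMsub hmhiM
      omega
    -- vp → M hence M ∩ (mlo, vp) = ∅
    have hvpM : ∀ x ∈ M, ¬(mlo < x ∧ x < vp) := by
      have hvpArr : ∀ x ∈ M, InvArc Q vp x := by
        rcases hMod vp (by simp; omega) hvpG.2.1 with h | h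
        · exact h
        · exfalso
          rcases h mhi hmhiM with ⟨h1, _⟩ | ⟨_, h2⟩
          · omega
          · have := hmhi_block _ h2 (by simp)
            have : vp ∈ ({u, mhi} : Set ℕ) := this ▸ (by simp)
            simp at this; omega
      intro x hxM ⟨hx1, hx2⟩
      rcases hvpArr x hxM with ⟨h1, _⟩ | ⟨_, h2⟩
      · omega
      · rw [Set.pair_comm] at h2
        have := hkey ({vh, vp} : Set ℕ) hA2 vp (by simp) (by omega) _ h2 (by simp)
        have hx : x ∈ ({vh, vp} : Set ℕ) := this ▸ (by simp)
        simp at hx; omega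
    -- M → u hence M ∩ (u, mhi) = ∅
    have hu_ne_vh : u ≠ vh := by omega
    have hu_block : ∀ C ∈ Q, u ∈ C → C = ({u, mhi} : Set ℕ) :=
      hkey ({u, mhi} : Set ℕ) huQ u (by simp) hu_ne_vh
    have huM : ∀ x ∈ M, ¬(u < x ∧ x < mhi) := by
      have huArr : ∀ x ∈ M, InvArc Q x u := by
        rcases hMod u (by simp; omega) hu.2.1 with h | h
        · exfalso
          rcases h mlo hmloM with ⟨h1, _⟩ | ⟨_, h2⟩
          · omega
          · have := hu_block _ h2 (by simp)
            have : mlo ∈ ({u, mhi} : Set ℕ) := this ▸ (by simp)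
            simp at this; omega
        · exact h
      intro x hxM ⟨hx1, hx2⟩
      rcases huArr x hxM with ⟨h1, _⟩ | ⟨_, h2⟩
      · omega
      · have := hu_block _ h2 (by simp)
        have hx : x ∈ ({u, mhi} : Set ℕ) := this ▸ (by simp)
        simp at hx; omega
    -- arithmetic facts
    have ha : ∀ w, 0 < w → w < vp → (w = vm ∨ w = u) := by
      intro w hw1 hw2
      by_cases hwM : w ∈ M
      · exact absurd ⟨by omega, hw2⟩ (hvpM w hwM)
      · rcases hGchar w (by omega) hwM (by omega) (by omega) with h | h | h
        · exact Or.inl h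
        · omega
        · exact Or.inr h
    have hb : ∀ w, u < w → w < n - 1 → (w = vm ∨ w = vp) := by
      intro w hw1 hw2
      by_cases hwM : w ∈ M
      · exact absurd ⟨hw1, by omega⟩ (huM w hwM)
      · rcases hGchar w (by omega) hwM (by omega) (by omega) with h | h | h
        · exact Or.inl h
        · exact Or.inr h
        · omega
    have hvm1 : vm = 1 ∧ vp = 2 := by
      have h1 := ha 1; have h2 := ha 2; have h3 := ha 3
      have h4 := hb (u + 1); have h5 := hb (u + 2); have h6 := hb (u + 3)
      have b1 : mlo < vm := hvmG.2.2.1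
      have b2 : vp < mhi := hvpG.2.2.2
      have b3 : mlo < u := hu.2.2.1
      have b4 : u < mhi := hu.2.2.2
      have b0 : mlo < vp := hvpG.2.2.1
      have b5 : u ≠ vm := hune.1
      have b6 : u ≠ vp := hune.2
      omega
    -- endgame: {0,1,2} is a nontrivial interval of X that is a union of blocks
    have hBQ : ({vh, vm, vp} : Set ℕ) ∈ QPart Q vh vm vp := Or.inr rfl
    refine hirr {({vh, vm, vp} : Set ℕ)} (Set.singleton_subset_iff.mpr hBQ) ?_
    rw [Set.sUnion_singleton]
    refine ⟨⟨?_, ?_⟩, ?_⟩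
    · intro x hx
      simp at hx
      rcases hx with h | h | h
      · exact h ▸ hvhX
      · exact h ▸ hvmX
      · exact h ▸ hvpX
    · intro v hv
      right
      intro i hi
      have hv2 : v ∉ ({vh, vm, vp} : Set ℕ) := hv.2
      simp at hv2 hi
      rcases hi with h | h | h <;> omega
    · rintro (h | ⟨a, ha'⟩ | h)
      · have : vh ∈ ({vh, vm, vp} : Set ℕ) := by simp
        rw [h] at this; exact this
      · have e1 : vh ∈ ({vh, vm, vp} : Set ℕ) := by simp
        have e2 : vm ∈ ({vh, vm, vp} : Set ℕ) := by simp
        rw [ha'] at e1 e2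
        simp at e1 e2; omega
      · rw [← h] at hNX
        simp at hNX
        omega
  · -- Branch 1: some z ∈ X outside [mlo, mhi]
    rw [Set.not_subset] at hXI
    obtain ⟨z, hzX, hzI⟩ := hXI
    set X := ⋃₀ Q with hXdef
    set I := X ∩ Set.Icc mlo mhi with hIdef
    set R := {B ∈ QPart Q vh vm vp | B ⊆ I} with hRdef
    have hmloI : mlo ∈ I := ⟨hvh ▸ hvhX, by simp; omega⟩
    have hmhiI : mhi ∈ I := ⟨hmhiX, by simp; omega⟩
    have huhiQP : ({u, mhi} : Set ℕ) ∈ QPart Q vh vm vp := by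
      left
      refine ⟨huQ, ?_⟩
      simp only [Set.mem_insert_iff, Set.mem_singleton_iff]
      push_neg
      constructor
      · intro h
        have : mhi ∈ ({vh, vm} : Set ℕ) := h ▸ (by simp)
        simp at this; omega
      · intro h
        have : mhi ∈ ({vh, vp} : Set ℕ) := h ▸ (by simp)
        simp at this; omega
    have hsR : ⋃₀ R = I := by
      apply Set.Subset.antisymm
      · rintro x ⟨B, ⟨_, hBI⟩, hxB⟩
        exact hBI hxB
      · intro x hxI
        obtain ⟨hxX, hxIcc⟩ := hxI
        simp only [Set.mem_Icc] at hxIcc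
        by_cases hx1 : x = mlo ∨ x = vm ∨ x = vp
        · refine ⟨({vh, vm, vp} : Set ℕ), ⟨Or.inr rfl, ?_⟩, ?_⟩
          · intro y hy
            simp at hy
            rcases hy with h | h | h
            · subst h; exact hvh ▸ hmloI
            · subst h; exact ⟨hvmX, by simp; omega⟩
            · subst h; exact ⟨hvpX, by simp; omega⟩
          · simp only [Set.mem_insert_iff, Set.mem_singleton_iff]
            rcases hx1 with h | h | h
            · exact Or.inl (by omega)
            · exact Or.inr (Or.inl h)
            · exact Or.inr (Or.inr h)
        · by_cases hx2 : x = u ∨ x = mhi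
          · refine ⟨({u, mhi} : Set ℕ), ⟨huhiQP, ?_⟩, ?_⟩
            · intro y hy
              simp at hy
              rcases hy with h | h
              · subst h; exact ⟨huX, by simp; omega⟩
              · subst h; exact hmhiI
            · simpa using hx2
          · -- x ∈ M, find its block
            push_neg at hx1 hx2
            have hxM : x ∈ M := by
              by_contra hxM
              rcases hGchar x (hXsubV hxX) hxM (by omega) (by omega) with h | h | h
              · exact hx1.2.1 h
              · exact hx1.2.2 h
              · exact hx2.1 h
            obtain ⟨B, hBQ', hxB⟩ := hxX
            obtain ⟨a, b, hab, hBab⟩ := Set.ncard_eq_two.mp (hQb B hBQ').2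
            -- wlog x = a
            have hxab : x = a ∨ x = b := by
              have := hBab ▸ hxB; simpa using this
            obtain ⟨y, hBxy, hyne⟩ : ∃ y, B = ({x, y} : Set ℕ) ∧ y ≠ x := by
              rcases hxab with h | h
              · subst h; exact ⟨b, hBab, hab.symm⟩
              · subst h; exact ⟨a, hBab.trans (Set.pair_comm a x), hab⟩
            have hyB : y ∈ B := hBxy ▸ (by simp)
            have hyX : y ∈ X := ⟨B, hBQ', hyB⟩
            have hyn : y < n := hXsubV hyX
            have hxyQ : ({x, y} : Set ℕ) ∈ Q := hBxy ▸ hBQ'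
            -- y is in [mlo, mhi]
            have hyIcc : mlo ≤ y ∧ y ≤ mhi := by
              constructor
              · by_contra hc
                push_neg at hc
                have hyM : y ∉ M := fun h => by have := hlo.2 h; omega
                rcases hMod y (by simp; omega) hyM with h | h
                · rcases h x hxM with ⟨h1, h2⟩ | ⟨h1, _⟩
                  · rw [Set.pair_comm] at h2; exact h2 hxyQ
                  · omega
                · rcases h mlo hmloM with ⟨h1, _⟩ | ⟨_, h2⟩
                  · omega
                  · have hvhm : vh ∈ ({mlo, y} : Set ℕ) := by rw [hvh]; simp
                    rcases hkey2 _ h2 hvhm with he | he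
                    · have : y ∈ ({vh, vm} : Set ℕ) := he ▸ (by simp)
                      simp at this; omega
                    · have : y ∈ ({vh, vp} : Set ℕ) := he ▸ (by simp)
                      simp at this; omega
              · by_contra hc
                push_neg at hc
                have hyM : y ∉ M := fun h => by have := hhi.2 h; omega
                rcases hMod y (by simp; omega) hyM with h | h
                · rcases h mhi hmhiM with ⟨h1, _⟩ | ⟨_, h2⟩
                  · omega
                  · have := hmhi_block _ h2 (by simp)
                    have : y ∈ ({u, mhi} : Set ℕ) := this ▸ (by simp)
                    simp at this; omega
                · rcases h x hxM with ⟨h1, h2⟩ | ⟨h1, _⟩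
                  · exact h2 hxyQ
                  · omega
            refine ⟨B, ⟨?_, ?_⟩, hxB⟩
            · left
              refine ⟨hBQ', ?_⟩
              simp only [Set.mem_insert_iff, Set.mem_singleton_iff]
              push_neg
              constructor
              · intro h
                have : x ∈ ({vh, vm} : Set ℕ) := h ▸ hxB
                simp at this
                rcases this with h' | h'
                · omega
                · exact hx1.2.1 h'
              · intro h
                have : x ∈ ({vh, vp} : Set ℕ) := h ▸ hxB
                simp at this
                rcases this with h' | h'
                · omega
                · exact hx1.2.2 h'
            · rw [hBxy]
              intro w hw
              simp at hw
              rcases hw with h | h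
              · exact h ▸ ⟨⟨B, hBQ', hxB⟩, by simp; omega⟩
              · exact h ▸ ⟨hyX, by simp [hyIcc.1, hyIcc.2]⟩
    refine hirr R (Set.sep_subset _ _) ?_
    rw [hsR]
    refine ⟨⟨Set.inter_subset_left, ?_⟩, ?_⟩
    · intro v hv
      have hv2 : v ∉ Set.Icc mlo mhi := fun h => hv.2 ⟨hv.1, h⟩
      simp only [Set.mem_Icc] at hv2
      push_neg at hv2
      by_cases hvlo : v < mlo
      · left; intro i hi
        have := hi.2; simp at this; omega
      · right; intro i hi
        have h1 := hi.2; simp at h1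
        have : mhi < v := by omega
        omega
    · rintro (h | ⟨a, ha'⟩ | h)
      · rw [h] at hmloI; exact hmloI
      · rw [ha'] at hmloI hmhiI
        simp at hmloI hmhiI; omega
      · rw [← h] at hzX
        exact hzI hzX.2

lemma scenario2 (n : ℕ) (hn : 6 ≤ n) (Q : Set (Set ℕ))
    (hQb : ∀ B ∈ Q, B ⊆ Set.Iio n ∧ B.ncard = 2)
    (vh vm vp : ℕ) (hA1 : ({vh, vm} : Set ℕ) ∈ Q) (hA2 : ({vh, vp} : Set ℕ) ∈ Q)
    (hmp : vm < vp)
    (hkey : ∀ B ∈ Q, ∀ x ∈ B, x ≠ vh → ∀ C ∈ Q, x ∈ C → C = B)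
    (hkey2 : ∀ B ∈ Q, vh ∈ B → B = ({vh, vm} : Set ℕ) ∨ B = ({vh, vp} : Set ℕ))
    (h0X : 0 ∈ ⋃₀ Q) (hNX : n - 1 ∈ ⋃₀ Q)
    (hirr : IrreducibleOn (⋃₀ Q) (QPart Q vh vm vp))
    (M : Set ℕ) (hMsub : M ⊆ Set.Iio n)
    (hMod : ∀ v ∈ Set.Iio n, v ∉ M →
      (∀ x ∈ M, InvArc Q v x) ∨ (∀ x ∈ M, InvArc Q x v))
    (mlo mhi : ℕ) (hlo : IsLeast M mlo) (hhi : IsGreatest M mhi) (hlohi : mlo < mhi)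
    (hGchar0 : ∀ g, g < n → g ∉ M → mlo < g → g < mhi →
      (({mlo, g} : Set ℕ) ∈ Q ∨ ({g, mhi} : Set ℕ) ∈ Q))
    (u : ℕ) (hu : u < n ∧ u ∉ M ∧ mlo < u ∧ u < mhi) (huQ : ({mlo, u} : Set ℕ) ∈ Q)
    (hvh : vh = mhi)
    (hvmG : vm < n ∧ vm ∉ M ∧ mlo < vm ∧ vm < mhi)
    (hvpG : vp < n ∧ vp ∉ M ∧ mlo < vp ∧ vp < mhi)
    (hune : u ≠ vm ∧ u ≠ vp) : False := by
  have hXsubV : ⋃₀ Q ⊆ Set.Iio n := by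
    intro x hx; obtain ⟨B, hB, hxB⟩ := hx; exact (hQb B hB).1 hxB
  have hvhX : vh ∈ ⋃₀ Q := ⟨_, hA1, by simp⟩
  have hvmX : vm ∈ ⋃₀ Q := ⟨_, hA1, by simp⟩
  have hvpX : vp ∈ ⋃₀ Q := ⟨_, hA2, by simp⟩
  have huX : u ∈ ⋃₀ Q := ⟨_, huQ, by simp⟩
  have hmloX : mlo ∈ ⋃₀ Q := ⟨_, huQ, by simp⟩
  have hmloM : mlo ∈ M := hlo.1
  have hmhiM : mhi ∈ M := hhi.1
  have hmlo_ne_vh : mlo ≠ vh := by omega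
  -- the block of mlo is unique
  have hmlo_block : ∀ C ∈ Q, mlo ∈ C → C = ({mlo, u} : Set ℕ) :=
    hkey ({mlo, u} : Set ℕ) huQ mlo (by simp) hmlo_ne_vh
  -- G is exactly {vm, vp, u}
  have hGchar : ∀ g, g < n → g ∉ M → mlo < g → g < mhi → (g = vm ∨ g = vp ∨ g = u) := by
    intro g hg1 hg2 hg3 hg4
    rcases hGchar0 g hg1 hg2 (by omega) (by omega) with h | h
    · have := hmlo_block _ h (by simp)
      have hg : g ∈ ({mlo, u} : Set ℕ) := this ▸ (by simp)
      simp at hg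
      rcases hg with h' | h'
      · omega
      · exact Or.inr (Or.inr h')
    · have hvhmem : vh ∈ ({g, mhi} : Set ℕ) := by rw [hvh]; simp
      rcases hkey2 _ h hvhmem with he | he
      · have : g ∈ ({vh, vm} : Set ℕ) := he ▸ (by simp)
        simp at this
        rcases this with h' | h'
        · omega
        · exact Or.inl h'
      · have : g ∈ ({vh, vp} : Set ℕ) := he ▸ (by simp)
        simp at this
        rcases this with h' | h'
        · omega
        · exact Or.inr (Or.inl h')
  by_cases hXI : ⋃₀ Q ⊆ Set.Icc mlo mhi
  · -- Branch 2 : mlo = 0, mhi = n - 1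
    have hmlo0 : mlo = 0 := by
      have := (hXI h0X).1; omega
    have hmhiN : mhi = n - 1 := by
      have h1 := (hXI hNX).2
      have h2 : mhi < n := hMsub hmhiM
      omega
    -- M → vm hence M ∩ (vm, mhi) = ∅
    have hvmM : ∀ x ∈ M, ¬(vm < x ∧ x < mhi) := by
      have hvmArr : ∀ x ∈ M, InvArc Q x vm := by
        rcases hMod vm (by simp; omega) hvmG.2.1 with h | h
        · exfalso
          rcases h mlo hmloM with ⟨h1, _⟩ | ⟨_, h2⟩
          · omega
          · rw [Set.pair_comm] at h2
            have := hmlo_block _ h2 (by simp)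
            have : vm ∈ ({mlo, u} : Set ℕ) := this ▸ (by simp)
            simp at this; omega
        · exact h
      intro x hxM ⟨hx1, hx2⟩
      rcases hvmArr x hxM with ⟨h1, _⟩ | ⟨_, h2⟩
      · omega
      · have := hkey ({vh, vm} : Set ℕ) hA1 vm (by simp) (by omega) _ h2 (by simp)
        have hx : x ∈ ({vh, vm} : Set ℕ) := this ▸ (by simp)
        simp at hx; omega
    -- u → M hence M ∩ (mlo, u) = ∅
    have hu_ne_vh : u ≠ vh := by omega
    have hu_block : ∀ C ∈ Q, u ∈ C → C = ({mlo, u} : Set ℕ) :=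
      hkey ({mlo, u} : Set ℕ) huQ u (by simp) hu_ne_vh
    have huM : ∀ x ∈ M, ¬(mlo < x ∧ x < u) := by
      have huArr : ∀ x ∈ M, InvArc Q u x := by
        rcases hMod u (by simp; omega) hu.2.1 with h | h
        · exact h
        · exfalso
          rcases h mhi hmhiM with ⟨h1, _⟩ | ⟨_, h2⟩
          · omega
          · have hvhmem : vh ∈ ({mhi, u} : Set ℕ) := by rw [hvh]; simp
            rcases hkey2 _ h2 hvhmem with he | he
            · have : u ∈ ({vh, vm} : Set ℕ) := he ▸ (by simp)
              simp at this; omega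
            · have : u ∈ ({vh, vp} : Set ℕ) := he ▸ (by simp)
              simp at this; omega
      intro x hxM ⟨hx1, hx2⟩
      rcases huArr x hxM with ⟨h1, _⟩ | ⟨_, h2⟩
      · omega
      · have := hu_block _ h2 (by simp)
        have hx : x ∈ ({mlo, u} : Set ℕ) := this ▸ (by simp)
        simp at hx; omega
    have ha : ∀ w, 0 < w → w < u → (w = vm ∨ w = vp) := by
      intro w hw1 hw2
      by_cases hwM : w ∈ M
      · exact absurd ⟨by omega, hw2⟩ (huM w hwM)
      · rcases hGchar w (by omega) hwM (by omega) (by omega) with h | h | h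
        · exact Or.inl h
        · exact Or.inr h
        · omega
    have hb : ∀ w, vm < w → w < n - 1 → (w = vp ∨ w = u) := by
      intro w hw1 hw2
      by_cases hwM : w ∈ M
      · exact absurd ⟨hw1, by omega⟩ (hvmM w hwM)
      · rcases hGchar w (by omega) hwM (by omega) (by omega) with h | h | h
        · omega
        · exact Or.inl h
        · exact Or.inr h
    have hvm1 : vm = n - 3 ∧ vp = n - 2 := by
      have h1 := ha 1; have h2 := ha 2; have h3 := ha 3
      have h4 := hb (vm + 1); have h5 := hb (vm + 2); have h6 := hb (vm + 3)
      have b1 : mlo < vm := hvmG.2.2.1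
      have b2 : vp < mhi := hvpG.2.2.2
      have b0 : mlo < vp := hvpG.2.2.1
      have b3 : mlo < u := hu.2.2.1
      have b4 : u < mhi := hu.2.2.2
      have b5 : u ≠ vm := hune.1
      have b6 : u ≠ vp := hune.2
      omega
    have hBQ : ({vh, vm, vp} : Set ℕ) ∈ QPart Q vh vm vp := Or.inr rfl
    refine hirr {({vh, vm, vp} : Set ℕ)} (Set.singleton_subset_iff.mpr hBQ) ?_
    rw [Set.sUnion_singleton]
    refine ⟨⟨?_, ?_⟩, ?_⟩
    · intro x hx
      simp at hx
      rcases hx with h | h | h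
      · exact h ▸ hvhX
      · exact h ▸ hvmX
      · exact h ▸ hvpX
    · intro v hv
      left
      intro i hi
      have hv2 : v ∉ ({vh, vm, vp} : Set ℕ) := hv.2
      have hv3 : v < n := hXsubV hv.1
      simp at hv2 hi
      rcases hi with h | h | h <;> omega
    · rintro (h | ⟨a, ha'⟩ | h)
      · have : vh ∈ ({vh, vm, vp} : Set ℕ) := by simp
        rw [h] at this; exact this
      · have e1 : vh ∈ ({vh, vm, vp} : Set ℕ) := by simp
        have e2 : vm ∈ ({vh, vm, vp} : Set ℕ) := by simp
        rw [ha'] at e1 e2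
        simp at e1 e2; omega
      · rw [← h] at h0X
        simp at h0X
        omega
  · -- Branch 1: some z ∈ X outside [mlo, mhi]
    rw [Set.not_subset] at hXI
    obtain ⟨z, hzX, hzI⟩ := hXI
    set X := ⋃₀ Q with hXdef
    set I := X ∩ Set.Icc mlo mhi with hIdef
    set R := {B ∈ QPart Q vh vm vp | B ⊆ I} with hRdef
    have hmloI : mlo ∈ I := ⟨hmloX, by simp; omega⟩
    have hmhiI : mhi ∈ I := ⟨hvh ▸ hvhX, by simp; omega⟩
    have hmlouQP : ({mlo, u} : Set ℕ) ∈ QPart Q vh vm vp := by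
      left
      refine ⟨huQ, ?_⟩
      simp only [Set.mem_insert_iff, Set.mem_singleton_iff]
      push_neg
      constructor
      · intro h
        have : mlo ∈ ({vh, vm} : Set ℕ) := h ▸ (by simp)
        simp at this; omega
      · intro h
        have : mlo ∈ ({vh, vp} : Set ℕ) := h ▸ (by simp)
        simp at this; omega
    have hsR : ⋃₀ R = I := by
      apply Set.Subset.antisymm
      · rintro x ⟨B, ⟨_, hBI⟩, hxB⟩
        exact hBI hxB
      · intro x hxI
        obtain ⟨hxX, hxIcc⟩ := hxI
        simp only [Set.mem_Icc] at hxIcc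
        by_cases hx1 : x = mhi ∨ x = vm ∨ x = vp
        · refine ⟨({vh, vm, vp} : Set ℕ), ⟨Or.inr rfl, ?_⟩, ?_⟩
          · intro y hy
            simp at hy
            rcases hy with h | h | h
            · subst h; exact hvh ▸ hmhiI
            · subst h; exact ⟨hvmX, by simp; omega⟩
            · subst h; exact ⟨hvpX, by simp; omega⟩
          · simp only [Set.mem_insert_iff, Set.mem_singleton_iff]
            rcases hx1 with h | h | h
            · exact Or.inl (by omega)
            · exact Or.inr (Or.inl h)
            · exact Or.inr (Or.inr h)
        · by_cases hx2 : x = mlo ∨ x = u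
          · refine ⟨({mlo, u} : Set ℕ), ⟨hmlouQP, ?_⟩, ?_⟩
            · intro y hy
              simp at hy
              rcases hy with h | h
              · subst h; exact hmloI
              · subst h; exact ⟨huX, by simp; omega⟩
            · simpa using hx2
          · push_neg at hx1 hx2
            have hxM : x ∈ M := by
              by_contra hxM
              rcases hGchar x (hXsubV hxX) hxM (by omega) (by omega) with h | h | h
              · exact hx1.2.1 h
              · exact hx1.2.2 h
              · exact hx2.2 h
            obtain ⟨B, hBQ', hxB⟩ := hxX
            obtain ⟨a, b, hab, hBab⟩ := Set.ncard_eq_two.mp (hQb B hBQ').2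
            have hxab : x = a ∨ x = b := by
              have := hBab ▸ hxB; simpa using this
            obtain ⟨y, hBxy, hyne⟩ : ∃ y, B = ({x, y} : Set ℕ) ∧ y ≠ x := by
              rcases hxab with h | h
              · subst h; exact ⟨b, hBab, hab.symm⟩
              · subst h; exact ⟨a, hBab.trans (Set.pair_comm a x), hab⟩
            have hyB : y ∈ B := hBxy ▸ (by simp)
            have hyX : y ∈ X := ⟨B, hBQ', hyB⟩
            have hyn : y < n := hXsubV hyX
            have hxyQ : ({x, y} : Set ℕ) ∈ Q := hBxy ▸ hBQ'
            have hyIcc : mlo ≤ y ∧ y ≤ mhi := by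
              constructor
              · by_contra hc
                push_neg at hc
                have hyM : y ∉ M := fun h => by have := hlo.2 h; omega
                rcases hMod y (by simp; omega) hyM with h | h
                · rcases h x hxM with ⟨h1, h2⟩ | ⟨h1, _⟩
                  · rw [Set.pair_comm] at h2; exact h2 hxyQ
                  · omega
                · rcases h mlo hmloM with ⟨h1, _⟩ | ⟨_, h2⟩
                  · omega
                  · have := hmlo_block _ h2 (by simp)
                    have : y ∈ ({mlo, u} : Set ℕ) := this ▸ (by simp)
                    simp at this; omega
              · by_contra hc
                push_neg at hc
                have hyM : y ∉ M := fun h => by have := hhi.2 h; omega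
                rcases hMod y (by simp; omega) hyM with h | h
                · rcases h mhi hmhiM with ⟨h1, _⟩ | ⟨_, h2⟩
                  · omega
                  · have hvhm : vh ∈ ({y, mhi} : Set ℕ) := by rw [hvh]; simp
                    rcases hkey2 _ h2 hvhm with he | he
                    · have : y ∈ ({vh, vm} : Set ℕ) := he ▸ (by simp)
                      simp at this; omega
                    · have : y ∈ ({vh, vp} : Set ℕ) := he ▸ (by simp)
                      simp at this; omega
                · rcases h x hxM with ⟨h1, h2⟩ | ⟨h1, _⟩
                  · exact h2 hxyQ
                  · omega
            refine ⟨B, ⟨?_, ?_⟩, hxB⟩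
            · left
              refine ⟨hBQ', ?_⟩
              simp only [Set.mem_insert_iff, Set.mem_singleton_iff]
              push_neg
              constructor
              · intro h
                have : x ∈ ({vh, vm} : Set ℕ) := h ▸ hxB
                simp at this
                rcases this with h' | h'
                · omega
                · exact hx1.2.1 h'
              · intro h
                have : x ∈ ({vh, vp} : Set ℕ) := h ▸ hxB
                simp at this
                rcases this with h' | h'
                · omega
                · exact hx1.2.2 h'
            · rw [hBxy]
              intro w hw
              simp at hw
              rcases hw with h | h
              · exact h ▸ ⟨⟨B, hBQ', hxB⟩, by simp; omega⟩
              · exact h ▸ ⟨hyX, by simp [hyIcc.1, hyIcc.2]⟩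
    refine hirr R (Set.sep_subset _ _) ?_
    rw [hsR]
    refine ⟨⟨Set.inter_subset_left, ?_⟩, ?_⟩
    · intro v hv
      have hv2 : v ∉ Set.Icc mlo mhi := fun h => hv.2 ⟨hv.1, h⟩
      simp only [Set.mem_Icc] at hv2
      push_neg at hv2
      by_cases hvlo : v < mlo
      · left; intro i hi
        have := hi.2; simp at this; omega
      · right; intro i hi
        have h1 := hi.2; simp at h1
        have : mhi < v := by omega
        omega
    · rintro (h | ⟨a, ha'⟩ | h)
      · rw [h] at hmloI; exact hmloI
      · rw [ha'] at hmloI hmhiI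
        simp at hmloI hmhiI; omega
      · rw [← h] at hzX
        exact hzI hzX.2
/-- equation (6) of the paper. Let `n ≥ 6`, `V = {0, …, n−1}`, `Q` a
partial quasi-pairing of `V` with distinguished data `(vh, vm, vp)` such that `⋃₀ Q` is a
transversal of `mc(underline(n))` and `Q` is irreducible, and let `M` be a nontrivial
module of `T := Inv(underline(n), Q)` with minimum `mlo` and maximum `mhi`. Then at most
`2` elements of `V ∖ M` lie in the closed interval `[mlo, mhi]`. -/
theorem stmt_10 (n : ℕ) (hn : 6 ≤ n) (Q : Set (Set ℕ))
    (hQ : IsPartialQuasiPairingOn (Set.Iio n) Q)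
    (vh vm vp : ℕ) (hdata : QPData Q vh vm vp)
    (htrans : TransversalOf (⋃₀ Q) (mcOn (Set.Iio n)))
    (hirr : IrreducibleOn (⋃₀ Q) (QPart Q vh vm vp))
    (M : Set ℕ) (hM : IsNontrivialModuleOn Q (Set.Iio n) M)
    (mlo mhi : ℕ) (hlo : IsLeast M mlo) (hhi : IsGreatest M mhi) :
    ((Set.Iio n \ M) ∩ Set.Icc mlo mhi).ncard ≤ 2 := by
  classical
  obtain ⟨hQb, m, hm1, hXcard, hQcard⟩ := hQ
  obtain ⟨hA1, hA2, hmp⟩ := hdata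
  by_contra hcon
  push_neg at hcon
  set G := (Set.Iio n \ M) ∩ Set.Icc mlo mhi with hGdef
  have hGfin : G.Finite := (Set.finite_Iio n).subset (fun x hx => hx.1.1)
  obtain ⟨a, haG, b, hbG, c, hcG, hab, hac, hbc⟩ := (Set.two_lt_ncard hGfin).mp hcon
  -- basic finiteness
  have hQfin : Q.Finite := Set.finite_of_ncard_ne_zero (by omega)
  have hBfin : ∀ B ∈ Q, B.Finite := fun B hB =>
    Set.finite_of_ncard_ne_zero (by rw [(hQb B hB).2]; omega)
  have hvhvm : vh ≠ vm := by
    intro h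
    have h2 := (hQb _ hA1).2
    rw [h] at h2
    simp at h2
  have hvhvp : vh ≠ vp := by
    intro h
    have h2 := (hQb _ hA2).2
    rw [h] at h2
    simp at h2
  have hA1A2 : ({vh, vm} : Set ℕ) ≠ ({vh, vp} : Set ℕ) := by
    intro h
    have : vm ∈ ({vh, vp} : Set ℕ) := h ▸ (by simp)
    simp at this
    rcases this with h' | h'
    · exact hvhvm h'.symm
    · omega
  set F := Q \ {({vh, vm} : Set ℕ), ({vh, vp} : Set ℕ)} with hFdef
  have hpairsub : ({({vh, vm} : Set ℕ), ({vh, vp} : Set ℕ)} : Set (Set ℕ)) ⊆ Q := by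
    intro B hB
    simp only [Set.mem_insert_iff, Set.mem_singleton_iff] at hB
    rcases hB with rfl | rfl
    · exact hA1
    · exact hA2
  have hFcard : F.ncard = m - 1 := by
    rw [hFdef, Set.ncard_diff hpairsub, Set.ncard_pair hA1A2, hQcard]
    omega
  have hFb : ∀ B ∈ F, B.Finite ∧ B.ncard ≤ 2 := fun B hB =>
    ⟨hBfin B hB.1, le_of_eq (hQb B hB.1).2⟩
  have hZeq : ({vh, vm} : Set ℕ) ∪ ({vh, vp} : Set ℕ) = ({vh, vm, vp} : Set ℕ) := by
    ext x; simp; tauto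
  have hQdecomp : ⋃₀ Q = ⋃₀ F ∪ ({vh, vm, vp} : Set ℕ) := by
    conv_lhs => rw [← Set.diff_union_of_subset hpairsub]
    rw [Set.sUnion_union, Set.sUnion_pair, hZeq]
  have hZcard : ({vh, vm, vp} : Set ℕ).ncard = 3 :=
    Set.ncard_eq_three.mpr ⟨vh, vm, vp, hvhvm, hvhvp, ne_of_lt hmp, rfl⟩
  have hYfin : (⋃₀ F).Finite :=
    Set.Finite.sUnion hQfin.diff (fun B hB => (hFb B hB).1)
  have hYle : (⋃₀ F).ncard ≤ 2 * (m - 1) := by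
    have := sUnion_ncard_le_two_mul F hQfin.diff hFb
    rwa [hFcard] at this
  have hXeq : (⋃₀ F ∪ ({vh, vm, vp} : Set ℕ)).ncard = 2 * m + 1 := by
    rw [← hQdecomp]; exact hXcard
  have hXle := Set.ncard_union_le (⋃₀ F) ({vh, vm, vp} : Set ℕ)
  have hYeq : (⋃₀ F).ncard = 2 * (m - 1) := by omega
  have hIE := Set.ncard_union_add_ncard_inter (⋃₀ F) ({vh, vm, vp} : Set ℕ)
    hYfin (Set.toFinite _)
  have hYZ : ∀ x, x ∈ ⋃₀ F → x ∈ ({vh, vm, vp} : Set ℕ) → False := by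
    intro x h1 h2
    have hne : ((⋃₀ F) ∩ ({vh, vm, vp} : Set ℕ)).Nonempty := ⟨x, h1, h2⟩
    have hfin : ((⋃₀ F) ∩ ({vh, vm, vp} : Set ℕ)).Finite := hYfin.inter_of_left _
    have := (Set.ncard_pos hfin).mpr hne
    omega
  have hpair := pairwise_of_ncard F hQfin.diff hFb (by rw [hFcard]; omega)
  -- key uniqueness lemmas
  have hkey : ∀ B ∈ Q, ∀ x ∈ B, x ≠ vh → ∀ C ∈ Q, x ∈ C → C = B := by
    intro B hB x hxB hxvh C hC hxC
    by_contra hne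
    by_cases hBF : B = ({vh, vm} : Set ℕ) ∨ B = ({vh, vp} : Set ℕ)
    · have hxZ : x ∈ ({vh, vm, vp} : Set ℕ) := by
        rcases hBF with rfl | rfl
        · simp at hxB ⊢; tauto
        · simp at hxB ⊢; tauto
      by_cases hCF : C = ({vh, vm} : Set ℕ) ∨ C = ({vh, vp} : Set ℕ)
      · rcases hBF with rfl | rfl <;> rcases hCF with rfl | rfl
        · exact hne rfl
        · simp at hxB hxC
          rcases hxB with h | h <;> rcases hxC with h' | h' <;> omega
        · simp at hxB hxC
          rcases hxB with h | h <;> rcases hxC with h' | h' <;> omega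
        · exact hne rfl
      · exact hYZ x ⟨C, ⟨hC, by simpa using hCF⟩, hxC⟩ hxZ
    · have hBF' : B ∈ F := ⟨hB, by simpa using hBF⟩
      by_cases hCF : C = ({vh, vm} : Set ℕ) ∨ C = ({vh, vp} : Set ℕ)
      · have hxZ : x ∈ ({vh, vm, vp} : Set ℕ) := by
          rcases hCF with rfl | rfl
          · simp at hxC ⊢; tauto
          · simp at hxC ⊢; tauto
        exact hYZ x ⟨B, hBF', hxB⟩ hxZ
      · exact hpair B hBF' C ⟨hC, by simpa using hCF⟩ (fun h => hne h.symm) x hxB hxC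
  have hkey2 : ∀ B ∈ Q, vh ∈ B →
      B = ({vh, vm} : Set ℕ) ∨ B = ({vh, vp} : Set ℕ) := by
    intro B hB hvhB
    by_contra hc
    push_neg at hc
    exact hYZ vh ⟨B, ⟨hB, by simpa using hc⟩, hvhB⟩ (by simp)
  -- transversal facts
  have h0X : 0 ∈ ⋃₀ Q := by
    obtain ⟨x, hxX, hx0⟩ := htrans _ (zero_mem_mcOn n hn)
    rw [Set.mem_singleton_iff] at hx0
    exact hx0 ▸ hxX
  have hNX : n - 1 ∈ ⋃₀ Q := by
    obtain ⟨x, hxX, hx0⟩ := htrans _ (last_mem_mcOn n hn)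
    rw [Set.mem_singleton_iff] at hx0
    exact hx0 ▸ hxX
  -- module facts
  obtain ⟨⟨hMsub, hMod⟩, hMnt⟩ := hM
  have hlohi : mlo < mhi := by
    rcases Nat.lt_or_ge mlo mhi with h | h
    · exact h
    exfalso
    apply hMnt
    right; left
    refine ⟨mlo, Set.eq_singleton_iff_unique_mem.mpr ⟨hlo.1, fun x hx => ?_⟩⟩
    have h1 := hlo.2 hx
    have h2 := hhi.2 hx
    omega
  have hGmem : ∀ g ∈ G, g < n ∧ g ∉ M ∧ mlo < g ∧ g < mhi := by
    intro g hg
    obtain ⟨⟨hg1, hg2⟩, hg3⟩ := hg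
    simp only [Set.mem_Iio] at hg1
    simp only [Set.mem_Icc] at hg3
    have hne1 : g ≠ mlo := fun h => hg2 (h ▸ hlo.1)
    have hne2 : g ≠ mhi := fun h => hg2 (h ▸ hhi.1)
    exact ⟨hg1, hg2, by omega, by omega⟩
  have hGchar0 : ∀ g, g < n → g ∉ M → mlo < g → g < mhi →
      (({mlo, g} : Set ℕ) ∈ Q ∨ ({g, mhi} : Set ℕ) ∈ Q) := by
    intro g h1 h2 h3 h4
    rcases hMod g (by simpa using h1) h2 with h | h
    · left
      rcases h mlo hlo.1 with ⟨hl, _⟩ | ⟨_, hr⟩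
      · omega
      · rw [Set.pair_comm] at hr; exact hr
    · right
      rcases h mhi hhi.1 with ⟨hl, _⟩ | ⟨_, hr⟩
      · omega
      · rw [Set.pair_comm] at hr; exact hr
  have htag : ∀ g ∈ G, (({mlo, g} : Set ℕ) ∈ Q ∨ ({g, mhi} : Set ℕ) ∈ Q) := by
    intro g hg
    obtain ⟨h1, h2, h3, h4⟩ := hGmem g hg
    exact hGchar0 g h1 h2 h3 h4
  -- two elements paired with mlo: scenario 1
  have twoLo : ∀ w1 w2 t, w1 ∈ G → w2 ∈ G → t ∈ G → w1 ≠ w2 → t ≠ w1 → t ≠ w2 →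
      ({mlo, w1} : Set ℕ) ∈ Q → ({mlo, w2} : Set ℕ) ∈ Q → False := by
    intro w1 w2 t hw1G hw2G htG h12 ht1 ht2 hw1Q hw2Q
    obtain ⟨hw1n, hw1M, hw1lo, hw1hi⟩ := hGmem w1 hw1G
    obtain ⟨hw2n, hw2M, hw2lo, hw2hi⟩ := hGmem w2 hw2G
    obtain ⟨htn, htM, htlo, hthi⟩ := hGmem t htG
    have hvh : vh = mlo := by
      by_contra hne
      have := hkey _ hw1Q mlo (by simp) (fun h => hne h.symm) _ hw2Q (by simp)
      have hw2m : w2 ∈ ({mlo, w1} : Set ℕ) := this ▸ (by simp)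
      simp at hw2m
      rcases hw2m with h | h
      · omega
      · exact h12 h.symm
    have hw1' : w1 = vm ∨ w1 = vp := by
      rcases hkey2 _ hw1Q (by rw [hvh]; simp) with he | he
      · have : w1 ∈ ({vh, vm} : Set ℕ) := he ▸ (by simp)
        simp at this
        rcases this with h | h
        · omega
        · exact Or.inl h
      · have : w1 ∈ ({vh, vp} : Set ℕ) := he ▸ (by simp)
        simp at this
        rcases this with h | h
        · omega
        · exact Or.inr h
    have hw2' : w2 = vm ∨ w2 = vp := by
      rcases hkey2 _ hw2Q (by rw [hvh]; simp) with he | he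
      · have : w2 ∈ ({vh, vm} : Set ℕ) := he ▸ (by simp)
        simp at this
        rcases this with h | h
        · omega
        · exact Or.inl h
      · have : w2 ∈ ({vh, vp} : Set ℕ) := he ▸ (by simp)
        simp at this
        rcases this with h | h
        · omega
        · exact Or.inr h
    rcases htag t htG with hQt | hQt
    · -- t also paired with mlo: impossible
      have ht' : t = vm ∨ t = vp := by
        rcases hkey2 _ hQt (by rw [hvh]; simp) with he | he
        · have : t ∈ ({vh, vm} : Set ℕ) := he ▸ (by simp)
          simp at this
          rcases this with h | h
          · omega
          · exact Or.inl h
        · have : t ∈ ({vh, vp} : Set ℕ) := he ▸ (by simp)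
          simp at this
          rcases this with h | h
          · omega
          · exact Or.inr h
      rcases hw1' with h | h <;> rcases hw2' with h' | h' <;> rcases ht' with h'' | h'' <;> omega
    · -- t paired with mhi: scenario 1
      rcases hw1' with h | h <;> rcases hw2' with h' | h'
      · omega
      · rw [h] at hw1n hw1M hw1lo hw1hi ht1
        rw [h'] at hw2n hw2M hw2lo hw2hi ht2
        exact scenario1 n hn Q hQb vh vm vp hA1 hA2 hmp hkey hkey2 h0X hNX hirr
          M hMsub hMod mlo mhi hlo hhi hlohi hGchar0 t ⟨htn, htM, htlo, hthi⟩ hQt hvh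
          ⟨hw1n, hw1M, hw1lo, hw1hi⟩ ⟨hw2n, hw2M, hw2lo, hw2hi⟩ ⟨ht1, ht2⟩
      · rw [h] at hw1n hw1M hw1lo hw1hi ht1
        rw [h'] at hw2n hw2M hw2lo hw2hi ht2
        exact scenario1 n hn Q hQb vh vm vp hA1 hA2 hmp hkey hkey2 h0X hNX hirr
          M hMsub hMod mlo mhi hlo hhi hlohi hGchar0 t ⟨htn, htM, htlo, hthi⟩ hQt hvh
          ⟨hw2n, hw2M, hw2lo, hw2hi⟩ ⟨hw1n, hw1M, hw1lo, hw1hi⟩ ⟨ht2, ht1⟩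
      · omega
  -- two elements paired with mhi: scenario 2
  have twoHi : ∀ w1 w2 t, w1 ∈ G → w2 ∈ G → t ∈ G → w1 ≠ w2 → t ≠ w1 → t ≠ w2 →
      ({w1, mhi} : Set ℕ) ∈ Q → ({w2, mhi} : Set ℕ) ∈ Q → False := by
    intro w1 w2 t hw1G hw2G htG h12 ht1 ht2 hw1Q hw2Q
    obtain ⟨hw1n, hw1M, hw1lo, hw1hi⟩ := hGmem w1 hw1G
    obtain ⟨hw2n, hw2M, hw2lo, hw2hi⟩ := hGmem w2 hw2G
    obtain ⟨htn, htM, htlo, hthi⟩ := hGmem t htG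
    have hvh : vh = mhi := by
      by_contra hne
      have := hkey _ hw1Q mhi (by simp) (fun h => hne h.symm) _ hw2Q (by simp)
      have hw2m : w2 ∈ ({w1, mhi} : Set ℕ) := this ▸ (by simp)
      simp at hw2m
      rcases hw2m with h | h
      · exact h12 h.symm
      · omega
    have hw1' : w1 = vm ∨ w1 = vp := by
      rcases hkey2 _ hw1Q (by rw [hvh]; simp) with he | he
      · have : w1 ∈ ({vh, vm} : Set ℕ) := he ▸ (by simp)
        simp at this
        rcases this with h | h
        · omega
        · exact Or.inl h
      · have : w1 ∈ ({vh, vp} : Set ℕ) := he ▸ (by simp)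
        simp at this
        rcases this with h | h
        · omega
        · exact Or.inr h
    have hw2' : w2 = vm ∨ w2 = vp := by
      rcases hkey2 _ hw2Q (by rw [hvh]; simp) with he | he
      · have : w2 ∈ ({vh, vm} : Set ℕ) := he ▸ (by simp)
        simp at this
        rcases this with h | h
        · omega
        · exact Or.inl h
      · have : w2 ∈ ({vh, vp} : Set ℕ) := he ▸ (by simp)
        simp at this
        rcases this with h | h
        · omega
        · exact Or.inr h
    rcases htag t htG with hQt | hQt
    · -- t paired with mlo: scenario 2
      rcases hw1' with h | h <;> rcases hw2' with h' | h'
      · omega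
      · rw [h] at hw1n hw1M hw1lo hw1hi ht1
        rw [h'] at hw2n hw2M hw2lo hw2hi ht2
        exact scenario2 n hn Q hQb vh vm vp hA1 hA2 hmp hkey hkey2 h0X hNX hirr
          M hMsub hMod mlo mhi hlo hhi hlohi hGchar0 t ⟨htn, htM, htlo, hthi⟩ hQt hvh
          ⟨hw1n, hw1M, hw1lo, hw1hi⟩ ⟨hw2n, hw2M, hw2lo, hw2hi⟩ ⟨ht1, ht2⟩
      · rw [h] at hw1n hw1M hw1lo hw1hi ht1
        rw [h'] at hw2n hw2M hw2lo hw2hi ht2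
        exact scenario2 n hn Q hQb vh vm vp hA1 hA2 hmp hkey hkey2 h0X hNX hirr
          M hMsub hMod mlo mhi hlo hhi hlohi hGchar0 t ⟨htn, htM, htlo, hthi⟩ hQt hvh
          ⟨hw2n, hw2M, hw2lo, hw2hi⟩ ⟨hw1n, hw1M, hw1lo, hw1hi⟩ ⟨ht2, ht1⟩
      · omega
    · -- t also paired with mhi: impossible
      have ht' : t = vm ∨ t = vp := by
        rcases hkey2 _ hQt (by rw [hvh]; simp) with he | he
        · have : t ∈ ({vh, vm} : Set ℕ) := he ▸ (by simp)
          simp at this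
          rcases this with h | h
          · omega
          · exact Or.inl h
        · have : t ∈ ({vh, vp} : Set ℕ) := he ▸ (by simp)
          simp at this
          rcases this with h | h
          · omega
          · exact Or.inr h
      rcases hw1' with h | h <;> rcases hw2' with h' | h' <;> rcases ht' with h'' | h'' <;> omega
  rcases htag a haG with h1 | h1 <;> rcases htag b hbG with h2 | h2 <;>
    rcases htag c hcG with h3 | h3
  · exact twoLo a b c haG hbG hcG hab hac.symm hbc.symm h1 h2
  · exact twoLo a b c haG hbG hcG hab hac.symm hbc.symm h1 h2
  · exact twoLo a c b haG hcG hbG hac (fun h => hab h.symm) hbc h1 h3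
  · exact twoHi b c a hbG hcG haG hbc hab hac h2 h3
  · exact twoLo b c a hbG hcG haG hbc hab hac h2 h3
  · exact twoHi a c b haG hcG hbG hac (fun h => hab h.symm) hbc h1 h3
  · exact twoHi a b c haG hbG hcG hab hac.symm hbc.symm h1 h2
  · exact twoHi a b c haG hbG hcG hab hac.symm hbc.symm h1 h2
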